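/- Let 0 < a < 1 and let M be the symmetric 6×6 real matrix indexed by the labels (AB, AC, AD, BC, BD, CD) with entries: all diagonal entries equal to 2; M(AB,AC) = M(AB,BD) = M(BC,BD) = M(BC,AC) = M(CD,AC) = M(CD,BD) = M(AD,AC) = M(AD,BD) = 1 + a; M(AB,BC) = M(BC,CD) = M(CD,AD) = M(AB,AD) = 1 + a²; and M(AB,CD) = M(AD,BC) = M(AC,BD) = 2a. Then there do not exist a real inner product space H and six vectors φ₁,…,φ₆ ∈ H such that ⟨φᵢ, φⱼ⟩ = M(i,j) for all 1 ≤ i, j ≤ 6. -/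

import Mathlib

open Matrix

section Aux
variable {α : Type*} (x0 x1 x2 x3 x4 x5 : α)
lemma aux_cons_val_0 : ![x0,x1,x2,x3,x4,x5] (0 : Fin 6) = x0 := rfl
lemma aux_cons_val_1 : ![x0,x1,x2,x3,x4,x5] (1 : Fin 6) = x1 := rfl
lemma aux_cons_val_2 : ![x0,x1,x2,x3,x4,x5] (2 : Fin 6) = x2 := rfl
lemma aux_cons_val_3 : ![x0,x1,x2,x3,x4,x5] (3 : Fin 6) = x3 := rfl
lemma aux_cons_val_4 : ![x0,x1,x2,x3,x4,x5] (4 : Fin 6) = x4 := rfl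
lemma aux_cons_val_5 : ![x0,x1,x2,x3,x4,x5] (5 : Fin 6) = x5 := rfl
end Aux

/-- The 6×6 Gram-candidate matrix of the six 2-tuples, indexed in the order
`(AB, AC, AD, BC, BD, CD)`. -/
def assignMatrix (a : ℝ) : Matrix (Fin 6) (Fin 6) ℝ :=
  !![2,       1 + a, 1 + a ^ 2, 1 + a ^ 2, 1 + a, 2 * a;
     1 + a,   2,     1 + a,     1 + a,     2 * a, 1 + a;
     1 + a ^ 2, 1 + a, 2,       2 * a,     1 + a, 1 + a ^ 2;
     1 + a ^ 2, 1 + a, 2 * a,   2,         1 + a, 1 + a ^ 2;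
     1 + a,   2 * a, 1 + a,     1 + a,     2,     1 + a;
     2 * a,   1 + a, 1 + a ^ 2, 1 + a ^ 2, 1 + a, 2]

/-- For `0 < a < 1`, there is no real inner product space `H` and vectors
`φ₁, …, φ₆ ∈ H` whose Gram matrix is `assignMatrix a`. -/
theorem assignMatrix_not_gram (a : ℝ) (h0 : 0 < a) (h1 : a < 1) :
    ¬ ∃ (H : Type) (nG : NormedAddCommGroup H)
        (ip : @InnerProductSpace ℝ H _ nG.toSeminormedAddCommGroup)
        (φ : Fin 6 → H),
        ∀ i j, @inner ℝ H ip.toInner (φ i) (φ j) = assignMatrix a i j := by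
  rintro ⟨H, nG, ip, φ, hip⟩
  set c : Fin 6 → ℝ := ![-1, 2, -1, -1, 2, -1] with hc
  have hx : (0:ℝ) ≤ inner ℝ (∑ i, c i • φ i) (∑ i, c i • φ i) :=
    real_inner_self_nonneg
  have heq : (inner ℝ (∑ i, c i • φ i) (∑ i, c i • φ i) : ℝ)
      = ∑ i, ∑ j, c i * (c j * assignMatrix a i j) := by
    rw [sum_inner]
    refine Finset.sum_congr rfl fun i _ => ?_
    rw [inner_sum]
    refine Finset.sum_congr rfl fun j _ => ?_
    rw [real_inner_smul_left, real_inner_smul_right, hip]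
  rw [heq] at hx
  simp only [Fin.sum_univ_six, hc, assignMatrix, Matrix.of_apply,
    aux_cons_val_0, aux_cons_val_1, aux_cons_val_2, aux_cons_val_3,
    aux_cons_val_4, aux_cons_val_5] at hx
  nlinarith [sq_nonneg a, mul_pos h0 (sub_pos.mpr h1)]
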